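/- In Euclidean space ℝ³, let Λ₊ = {(s, exp s, exp s) : s ∈ ℝ} and Λ₋ = {(s, −exp s, −exp s) : s ∈ ℝ}. Then Λ₊ and Λ₋ are disjoint, yet the infimum of distances between them is zero: for every ε > 0 there exist p ∈ Λ₊ and q ∈ Λ₋ with dist(p, q) < ε. Consequently, for no r > 0 is the r-neighbourhood of one branch disjoint from the other branch, so the union L̃ = Λ₊ ∪ Λ₋ admits no tubular neighbourhood of positive radius with respect to the Euclidean metric. -/
import Mathlib

private lemma key_dist (s : ℝ) :
    dist ((WithLp.equiv 2 (Fin 3 → ℝ)).symm ![s, Real.exp s, Real.exp s])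
      ((WithLp.equiv 2 (Fin 3 → ℝ)).symm ![s, -Real.exp s, -Real.exp s])
      = Real.sqrt 8 * Real.exp s := by
  rw [EuclideanSpace.dist_eq]
  simp [Fin.sum_univ_three, Real.dist_eq]
  rw [show (Real.exp s + Real.exp s) ^ 2 + (Real.exp s + Real.exp s) ^ 2
    = 8 * Real.exp s ^ 2 by ring]
  rw [Real.sqrt_mul (by norm_num), Real.sqrt_sq (Real.exp_pos s).le]

private lemma sqrt8_lt : Real.sqrt 8 < 3 := by
  nlinarith [Real.sq_sqrt (by norm_num : (8:ℝ) ≥ 0), Real.sqrt_nonneg 8]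

/-- In Euclidean `ℝ³`, the two branches `Λ₊ = {(s, eˢ, eˢ)}` and
`Λ₋ = {(s, −eˢ, −eˢ)}` of the lift of the trivial conical cobordism are disjoint, the
infimum of distances between them is `0`, and for no `r > 0` is the `r`-neighbourhood of
one branch disjoint from the other: the union admits no tubular neighbourhood of positive
radius for the Euclidean metric. -/
theorem stmt_2
    (Λp Λm : Set (EuclideanSpace ℝ (Fin 3)))
    (hp : Λp = Set.range fun s : ℝ =>
      (WithLp.equiv 2 (Fin 3 → ℝ)).symm ![s, Real.exp s, Real.exp s])
    (hm : Λm = Set.range fun s : ℝ =>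
      (WithLp.equiv 2 (Fin 3 → ℝ)).symm ![s, -Real.exp s, -Real.exp s]) :
    Disjoint Λp Λm ∧
    (∀ ε > 0, ∃ p ∈ Λp, ∃ q ∈ Λm, dist p q < ε) ∧
    ∀ r > 0, ¬ Disjoint (Metric.thickening r Λp) Λm := by
  have hsmall : ∀ ε > (0:ℝ), ∃ s : ℝ, Real.sqrt 8 * Real.exp s < ε := by
    intro ε hε
    refine ⟨Real.log (ε / 3), ?_⟩
    rw [Real.exp_log (by positivity)]
    calc Real.sqrt 8 * (ε / 3) < 3 * (ε / 3) := by
          apply mul_lt_mul_of_pos_right sqrt8_lt (by positivity)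
      _ = ε := by ring
  refine ⟨?_, ?_, ?_⟩
  · rw [Set.disjoint_left]
    rintro x hx hx'
    rw [hp] at hx; rw [hm] at hx'
    obtain ⟨s, hs⟩ := hx
    obtain ⟨t, ht⟩ := hx'
    have h : (![s, Real.exp s, Real.exp s] : Fin 3 → ℝ)
        = ![t, -Real.exp t, -Real.exp t] :=
      (WithLp.equiv 2 (Fin 3 → ℝ)).symm.injective (hs.trans ht.symm)
    have h0 := congrFun h 0
    have h1 := congrFun h 1
    simp at h0 h1
    subst h0
    nlinarith [Real.exp_pos s, h1]
  · intro ε hε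
    obtain ⟨s, hs⟩ := hsmall ε hε
    exact ⟨_, hp ▸ Set.mem_range_self s, _, hm ▸ Set.mem_range_self s,
      by rw [key_dist]; exact hs⟩
  · intro r hr
    rw [Set.not_disjoint_iff]
    obtain ⟨s, hs⟩ := hsmall r hr
    refine ⟨(WithLp.equiv 2 (Fin 3 → ℝ)).symm ![s, -Real.exp s, -Real.exp s], ?_,
      hm ▸ Set.mem_range_self s⟩
    rw [Metric.mem_thickening_iff]
    exact ⟨_, hp ▸ Set.mem_range_self s, by rw [dist_comm, key_dist]; exact hs⟩
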